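/- arXiv:2311.02696 — 4 statements merged into one kernel-verified Lean document; each statement's English description precedes it below -/
import Mathlib

section
/- The function $b(x) = \log|x|$ belongs to $BMO^A(\mathbb{R}^n)$ for every invertible matrix $A$: there exists a constant $C = C(A, n) > 0$ such that for every ball $B(x,R) \subset \mathbb{R}^n$, $|\fint_{B(x,R)} \log|y|\,dy - \fint_{A(B(x,R))} \log|y|\,dy| \leq C$. -/
open MeasureTheory Metric Set

/-- The function `log ‖x‖` belongs to `BMO^A(ℝⁿ)` for every invertible matrix `A`. -/
theorem log_mem_BMOA {n : ℕ}
    (A : EuclideanSpace ℝ (Fin n) ≃L[ℝ] EuclideanSpace ℝ (Fin n)) :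
    ∃ C : ℝ, 0 < C ∧ ∀ (x : EuclideanSpace ℝ (Fin n)) (R : ℝ), 0 < R →
      |(⨍ y in ball x R, Real.log ‖y‖) - ⨍ y in (⇑A '' ball x R), Real.log ‖y‖| ≤ C := by
  set E := EuclideanSpace ℝ (Fin n)
  set L : E →L[ℝ] E := (A : E →L[ℝ] E) with hL
  set Li : E →L[ℝ] E := (A.symm : E →L[ℝ] E) with hLi
  set M : ℝ := |Real.log ‖L‖| + |Real.log ‖Li‖| with hMdef
  have hM : 0 ≤ M := by positivity
  -- pointwise bound
  have hpt : ∀ y : E, |Real.log ‖A y‖ - Real.log ‖y‖| ≤ M := by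
    intro y
    rcases eq_or_ne y 0 with rfl | hy
    · simp [hM]
    · have hy0 : (0:ℝ) < ‖y‖ := norm_pos_iff.2 hy
      have hAy : (0:ℝ) < ‖A y‖ := by
        rw [norm_pos_iff]
        intro h
        apply hy
        have := congrArg A.symm h
        simpa using this
      have h1 : ‖A y‖ ≤ ‖L‖ * ‖y‖ := L.le_opNorm y
      have h2 : ‖y‖ ≤ ‖Li‖ * ‖A y‖ := by
        have h := Li.le_opNorm (A y)
        rwa [show Li (A y) = y from A.symm_apply_apply y] at h
      have hLpos : (0:ℝ) < ‖L‖ := by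
        by_contra h
        push_neg at h
        have : ‖L‖ = 0 := le_antisymm h (norm_nonneg _)
        nlinarith
      have hLipos : (0:ℝ) < ‖Li‖ := by
        by_contra h
        push_neg at h
        have : ‖Li‖ = 0 := le_antisymm h (norm_nonneg _)
        nlinarith
      have e1 : Real.log ‖A y‖ ≤ Real.log ‖L‖ + Real.log ‖y‖ := by
        calc Real.log ‖A y‖ ≤ Real.log (‖L‖ * ‖y‖) := Real.log_le_log hAy h1
        _ = Real.log ‖L‖ + Real.log ‖y‖ := Real.log_mul hLpos.ne' hy0.ne'
      have e2 : Real.log ‖y‖ ≤ Real.log ‖Li‖ + Real.log ‖A y‖ := by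
        calc Real.log ‖y‖ ≤ Real.log (‖Li‖ * ‖A y‖) := Real.log_le_log hy0 h2
        _ = Real.log ‖Li‖ + Real.log ‖A y‖ := Real.log_mul hLipos.ne' hAy.ne'
      have l1 : Real.log ‖L‖ ≤ |Real.log ‖L‖| := le_abs_self _
      have l2 : Real.log ‖Li‖ ≤ |Real.log ‖Li‖| := le_abs_self _
      have a1 : (0:ℝ) ≤ |Real.log ‖L‖| := abs_nonneg _
      have a2 : (0:ℝ) ≤ |Real.log ‖Li‖| := abs_nonneg _
      rw [abs_le]
      constructor <;> [skip; skip] <;> simp only [hMdef] <;> linarith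
  refine ⟨M + 1, by linarith, fun x R hR => ?_⟩
  set B := ball x R with hB
  have hBm : MeasurableSet B := measurableSet_ball
  have hμB0 : 0 < volume B := measure_ball_pos _ _ hR
  have hμBt : volume B ≠ ⊤ := measure_ball_lt_top.ne
  -- determinant
  set d : ℝ := ContinuousLinearMap.det L with hd
  have hd0 : d ≠ 0 := by
    have : IsUnit (LinearMap.det (A.toLinearEquiv : E →ₗ[ℝ] E)) :=
      LinearEquiv.isUnit_det' A.toLinearEquiv
    exact this.ne_zero
  have habs : (0:ℝ) < |d| := abs_pos.2 hd0
  -- change of variables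
  have hderiv : ∀ y ∈ B, HasFDerivWithinAt (⇑A) L B y := fun y _ =>
    A.hasFDerivAt.hasFDerivWithinAt
  have hinj : InjOn (⇑A) B := A.injective.injOn
  have hcov : ∫ y in ⇑A '' B, Real.log ‖y‖ =
      ∫ y in B, |d| • Real.log ‖A y‖ :=
    integral_image_eq_integral_abs_det_fderiv_smul volume hBm hderiv hinj _
  have hcovI : IntegrableOn (fun y => Real.log ‖y‖) (⇑A '' B) volume ↔
      IntegrableOn (fun y => |d| • Real.log ‖A y‖) B volume :=
    integrableOn_image_iff_integrableOn_abs_det_fderiv_smul volume hBm hderiv hinj _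
  -- measure of image
  have hμim : volume (⇑A '' B) = ENNReal.ofReal |d| * volume B := by
    simp [MeasureTheory.Measure.addHaar_image_continuousLinearEquiv volume A B]
    rfl
  have hμimT : (volume (⇑A '' B)).toReal = |d| * (volume B).toReal := by
    rw [hμim, ENNReal.toReal_mul, ENNReal.toReal_ofReal (abs_nonneg d)]
  -- measurability of the difference
  have hmes : AEStronglyMeasurable (fun y : E => Real.log ‖A y‖ - Real.log ‖y‖) volume := by
    apply Measurable.aestronglyMeasurable
    exact (Real.measurable_log.comp (A.continuous.norm.measurable)).sub
      (Real.measurable_log.comp measurable_norm)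
  have hdiffInt : IntegrableOn (fun y : E => Real.log ‖A y‖ - Real.log ‖y‖) B volume :=
    Measure.integrableOn_of_bounded hμBt hmes
      (ae_of_all _ fun y => by simpa using hpt y)
  by_cases hint : IntegrableOn (fun y : E => Real.log ‖y‖) B volume
  · -- integrable case
    have hint2 : IntegrableOn (fun y : E => Real.log ‖A y‖) B volume := by
      have : (fun y : E => Real.log ‖A y‖) =
          fun y => (Real.log ‖A y‖ - Real.log ‖y‖) + Real.log ‖y‖ := by
        funext y; ring
      rw [this]
      exact hdiffInt.add hint
    have key : (⨍ y in B, Real.log ‖y‖) - ⨍ y in ⇑A '' B, Real.log ‖y‖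
        = ((volume B).toReal)⁻¹ * ∫ y in B, (Real.log ‖y‖ - Real.log ‖A y‖) := by
      rw [setAverage_eq, setAverage_eq, measureReal_def, measureReal_def, hcov, hμimT, integral_smul,
        integral_sub hint hint2]
      have hBT : ((volume B).toReal) ≠ 0 :=
        (ENNReal.toReal_pos hμB0.ne' hμBt).ne'
      field_simp
      simp only [smul_eq_mul, one_div]
      rw [mul_inv, mul_sub, ← mul_assoc ((volume B).toReal) ((volume B).toReal)⁻¹,
        mul_inv_cancel₀ hBT, one_mul, mul_assoc ((volume B).toReal)⁻¹ |d|⁻¹,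
        ← mul_assoc |d|⁻¹ |d|, inv_mul_cancel₀ habs.ne', one_mul,
        ← mul_assoc ((volume B).toReal) ((volume B).toReal)⁻¹, mul_inv_cancel₀ hBT, one_mul]
    rw [key]
    have hbound : ‖∫ y in B, (Real.log ‖y‖ - Real.log ‖A y‖)‖
        ≤ M * (volume B).toReal := by
      apply norm_setIntegral_le_of_norm_le_const hμBt.lt_top
      · intro y _
        rw [Real.norm_eq_abs, abs_sub_comm]
        exact hpt y
    have hBTpos : (0:ℝ) < (volume B).toReal := ENNReal.toReal_pos hμB0.ne' hμBt
    rw [abs_mul, abs_inv, abs_of_nonneg ENNReal.toReal_nonneg]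
    calc ((volume B).toReal)⁻¹ * |∫ y in B, (Real.log ‖y‖ - Real.log ‖A y‖)|
        ≤ ((volume B).toReal)⁻¹ * (M * (volume B).toReal) := by
          apply mul_le_mul_of_nonneg_left _ (inv_nonneg.2 ENNReal.toReal_nonneg)
          simpa [Real.norm_eq_abs] using hbound
      _ = M := by field_simp
      _ ≤ M + 1 := by linarith
  · -- non-integrable case: both averages vanish
    have h1 : (⨍ y in B, Real.log ‖y‖) = 0 := by
      rw [setAverage_eq, integral_undef hint, smul_zero]
    have hint2 : ¬ IntegrableOn (fun y : E => Real.log ‖A y‖) B volume := by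
      intro h
      apply hint
      have : (fun y : E => Real.log ‖y‖) =
          fun y => Real.log ‖A y‖ - (Real.log ‖A y‖ - Real.log ‖y‖) := by
        funext y; ring
      rw [this]
      exact h.sub hdiffInt
    have hint3 : ¬ IntegrableOn (fun y : E => Real.log ‖y‖) (⇑A '' B) volume := by
      rw [hcovI]
      intro h
      apply hint2
      have := (integrable_smul_iff (c := |d|) habs.ne'
        (fun y : E => Real.log ‖A y‖) (μ := volume.restrict B)).1 h
      exact this
    have h2 : (⨍ y in ⇑A '' B, Real.log ‖y‖) = 0 := by
      rw [setAverage_eq, integral_undef hint3, smul_zero]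
    rw [h1, h2]
    simp
    linarith
end

section
/- Let $A$ be an invertible matrix and $b \in BMO(\mathbb{R}^n)$. Then $b \in BMO^A(\mathbb{R}^n)$ if and only if $\sup_{x \in \mathbb{R}^n, R > 0} |\fint_{B(x,R)} b - \fint_{B(Ax,R)} b| < \infty$. -/
open MeasureTheory Metric Set

private lemma avg_diff_le_ratio {n : ℕ} (b : EuclideanSpace ℝ (Fin n) → ℝ)
    (S : Set (EuclideanSpace ℝ (Fin n))) (c : EuclideanSpace ℝ (Fin n)) {r : ℝ}
    (hint : IntegrableOn b (ball c r))
    (hsub : S ⊆ ball c r) (hpos : 0 < volume S) :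
    |(⨍ y in S, b y) - ⨍ y in ball c r, b y| ≤
      ((volume (ball c r)).toReal / (volume S).toReal) *
        ⨍ y in ball c r, |b y - ⨍ z in ball c r, b z| := by
  set B := ball c r with hB
  set m := ⨍ y in B, b y with hm
  have hSfin : volume S < ⊤ := (measure_mono hsub).trans_lt measure_ball_lt_top
  have hα : 0 < (volume S).toReal := ENNReal.toReal_pos hpos.ne' hSfin.ne
  have hβfin : volume B < ⊤ := measure_ball_lt_top
  have hβ : 0 < (volume B).toReal :=
    ENNReal.toReal_pos (hpos.trans_le (measure_mono hsub)).ne' hβfin.ne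
  have hintS : IntegrableOn b S := hint.mono_set hsub
  have hconstS : IntegrableOn (fun _ => m) S volume := integrableOn_const hSfin.ne
  have hconstB : IntegrableOn (fun _ => m) B volume := integrableOn_const hβfin.ne
  have h1 : (⨍ y in S, b y) - m = (volume S).toReal⁻¹ * ∫ y in S, (b y - m) := by
    rw [integral_sub hintS hconstS, setIntegral_const, smul_eq_mul, measureReal_def, mul_sub,
      inv_mul_cancel_left₀ hα.ne', setAverage_eq, smul_eq_mul, measureReal_def]
  have h2 : |∫ y in S, (b y - m)| ≤ ∫ y in B, |b y - m| := by
    calc |∫ y in S, (b y - m)| ≤ ∫ y in S, |b y - m| := by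
          simpa [Real.norm_eq_abs] using
            norm_integral_le_integral_norm (μ := volume.restrict S) (fun y => b y - m)
      _ ≤ ∫ y in B, |b y - m| :=
          setIntegral_mono_set (hint.sub hconstB).abs
            (Filter.Eventually.of_forall fun y => abs_nonneg _) hsub.eventuallyLE
  have h3 : ∫ y in B, |b y - m| = (volume B).toReal * ⨍ y in B, |b y - m| := by
    rw [setAverage_eq, smul_eq_mul, measureReal_def, ← mul_assoc, mul_inv_cancel₀ hβ.ne', one_mul]
  calc |(⨍ y in S, b y) - m| = (volume S).toReal⁻¹ * |∫ y in S, (b y - m)| := by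
        rw [h1, abs_mul, abs_of_nonneg (inv_nonneg.2 hα.le)]
    _ ≤ (volume S).toReal⁻¹ * ((volume B).toReal * ⨍ y in B, |b y - m|) := by
        rw [← h3]; exact mul_le_mul_of_nonneg_left h2 (inv_nonneg.2 hα.le)
    _ = ((volume B).toReal / (volume S).toReal) * ⨍ y in B, |b y - m| := by ring

/-- Equivalent characterization of `BMO^A(ℝⁿ)`: a BMO function `b` satisfies
`sup_B |⨍_B b - ⨍_{A(B)} b| < ∞` iff `sup_{x,R} |⨍_{B(x,R)} b - ⨍_{B(Ax,R)} b| < ∞`. -/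
theorem BMOA_iff_translated_balls {n : ℕ}
    (A : EuclideanSpace ℝ (Fin n) ≃L[ℝ] EuclideanSpace ℝ (Fin n))
    (b : EuclideanSpace ℝ (Fin n) → ℝ) (hb : LocallyIntegrable b volume)
    (M : ℝ) (hM : ∀ (x : EuclideanSpace ℝ (Fin n)) (R : ℝ), 0 < R →
      (⨍ y in ball x R, |b y - ⨍ z in ball x R, b z|) ≤ M) :
    (∃ C : ℝ, ∀ (x : EuclideanSpace ℝ (Fin n)) (R : ℝ), 0 < R →
        |(⨍ y in ball x R, b y) - ⨍ y in (⇑A '' ball x R), b y| ≤ C) ↔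
    (∃ C : ℝ, ∀ (x : EuclideanSpace ℝ (Fin n)) (R : ℝ), 0 < R →
        |(⨍ y in ball x R, b y) - ⨍ y in ball (A x) R, b y| ≤ C) := by
  cases subsingleton_or_nontrivial (EuclideanSpace ℝ (Fin n)) with
  | inl hsub =>
      have hball : ∀ (x : EuclideanSpace ℝ (Fin n)) (R : ℝ), 0 < R → ball x R = univ := by
        intro x R hR
        ext y
        simp [mem_ball, Subsingleton.elim y x, hR]
      have himg : ∀ (x : EuclideanSpace ℝ (Fin n)) (R : ℝ), 0 < R → ⇑A '' ball x R = univ := by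
        intro x R hR
        rw [hball x R hR, image_univ, A.surjective.range_eq]
      constructor
      · rintro -
        exact ⟨0, fun x R hR => by rw [hball x R hR, hball (A x) R hR, sub_self, abs_zero]⟩
      · rintro -
        exact ⟨0, fun x R hR => by rw [himg x R hR, hball x R hR, sub_self, abs_zero]⟩
  | inr hnt =>
    set N := Module.finrank ℝ (EuclideanSpace ℝ (Fin n)) with hN
    set K : ℝ := ‖(A : EuclideanSpace ℝ (Fin n) →L[ℝ] EuclideanSpace ℝ (Fin n))‖ + 1 with hK
    have hK1 : 1 ≤ K := le_add_of_nonneg_left (norm_nonneg _)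
    have hK0 : 0 < K := lt_of_lt_of_le one_pos hK1
    set d : ℝ := |LinearMap.det (A : EuclideanSpace ℝ (Fin n) →ₗ[ℝ] EuclideanSpace ℝ (Fin n))| with hd
    have hd0 : 0 < d := abs_pos.2 (LinearEquiv.isUnit_det' A.toLinearEquiv).ne_zero
    set c0 : ℝ := (volume (ball (0 : EuclideanSpace ℝ (Fin n)) 1)).toReal with hc0
    have hc0pos : 0 < c0 :=
      ENNReal.toReal_pos (measure_ball_pos _ _ one_pos).ne' measure_ball_lt_top.ne
    have hvol : ∀ (c : EuclideanSpace ℝ (Fin n)) (r : ℝ), 0 < r → (volume (ball c r)).toReal = r ^ N * c0 := by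
      intro c r hr
      rw [Measure.addHaar_ball volume c hr.le, ENNReal.toReal_mul,
        ENNReal.toReal_ofReal (by positivity)]
    have himgvol : ∀ (x : EuclideanSpace ℝ (Fin n)) (r : ℝ), 0 < r →
        (volume (⇑A '' ball x r)).toReal = d * (r ^ N * c0) := by
      intro x r hr
      rw [Measure.addHaar_image_continuousLinearEquiv, ENNReal.toReal_mul,
        ENNReal.toReal_ofReal (abs_nonneg _), hvol x r hr]
    have hM0 : 0 ≤ M := by
      refine le_trans ?_ (hM 0 1 one_pos)
      rw [setAverage_eq, smul_eq_mul]
      positivity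
    have bridge : ∀ (x : EuclideanSpace ℝ (Fin n)) (R : ℝ), 0 < R →
        |(⨍ y in ⇑A '' ball x R, b y) - ⨍ y in ball (A x) R, b y| ≤
          (K ^ N / d + K ^ N) * M := by
      intro x R hR
      have hKR : 0 < K * R := mul_pos hK0 hR
      have hintB : IntegrableOn b (ball (A x) (K * R)) :=
        (hb.integrableOn_isCompact (isCompact_closedBall (A x) (K * R))).mono_set
          ball_subset_closedBall
      have hsub1 : ball (A x) R ⊆ ball (A x) (K * R) :=
        ball_subset_ball (le_mul_of_one_le_left hR.le hK1)
      have hsub2 : ⇑A '' ball x R ⊆ ball (A x) (K * R) := by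
        rintro - ⟨z, hz, rfl⟩
        rw [mem_ball, dist_eq_norm, ← map_sub]
        have h1 : ‖(A : EuclideanSpace ℝ (Fin n) →L[ℝ] EuclideanSpace ℝ (Fin n)) (z - x)‖ ≤ ‖(A : EuclideanSpace ℝ (Fin n) →L[ℝ] EuclideanSpace ℝ (Fin n))‖ * ‖z - x‖ :=
          (A : EuclideanSpace ℝ (Fin n) →L[ℝ] EuclideanSpace ℝ (Fin n)).le_opNorm _
        have h2 : ‖z - x‖ < R := by rwa [mem_ball, dist_eq_norm] at hz
        have h3 : (0:ℝ) ≤ ‖(A : EuclideanSpace ℝ (Fin n) →L[ℝ] EuclideanSpace ℝ (Fin n))‖ := norm_nonneg _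
        calc ‖A (z - x)‖ = ‖(A : EuclideanSpace ℝ (Fin n) →L[ℝ] EuclideanSpace ℝ (Fin n)) (z - x)‖ := rfl
          _ ≤ ‖(A : EuclideanSpace ℝ (Fin n) →L[ℝ] EuclideanSpace ℝ (Fin n))‖ * ‖z - x‖ := h1
          _ < K * R := by nlinarith
      have hpos1 : 0 < volume (ball (A x) R) := measure_ball_pos _ _ hR
      have hpos2 : 0 < volume (⇑A '' ball x R) :=
        ((A.toHomeomorph.isOpenMap _ isOpen_ball).measure_pos volume
          ⟨A x, mem_image_of_mem _ (mem_ball_self hR)⟩)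
      have havg := hM (A x) (K * R) hKR
      have h1 := avg_diff_le_ratio b (⇑A '' ball x R) (A x) hintB hsub2 hpos2
      have h2 := avg_diff_le_ratio b (ball (A x) R) (A x) hintB hsub1 hpos1
      have hr1 : (volume (ball (A x) (K * R))).toReal / (volume (⇑A '' ball x R)).toReal
          = K ^ N / d := by
        rw [hvol _ _ hKR, himgvol _ _ hR, mul_pow]
        field_simp
      have hr2 : (volume (ball (A x) (K * R))).toReal / (volume (ball (A x) R)).toReal
          = K ^ N := by
        rw [hvol _ _ hKR, hvol _ _ hR, mul_pow]
        field_simp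
      have havgnn : 0 ≤ ⨍ y in ball (A x) (K * R),
          |b y - ⨍ z in ball (A x) (K * R), b z| := by
        rw [setAverage_eq, smul_eq_mul]
        positivity
      have hb1 : |(⨍ y in ⇑A '' ball x R, b y) - ⨍ y in ball (A x) (K * R), b y| ≤
          (K ^ N / d) * M := by
        refine h1.trans ?_
        rw [hr1]
        exact mul_le_mul (le_refl _) havg havgnn (by positivity)
      have hb2 : |(⨍ y in ball (A x) R, b y) - ⨍ y in ball (A x) (K * R), b y| ≤
          K ^ N * M := by
        refine h2.trans ?_
        rw [hr2]
        exact mul_le_mul (le_refl _) havg havgnn (by positivity)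
      calc |(⨍ y in ⇑A '' ball x R, b y) - ⨍ y in ball (A x) R, b y|
          ≤ |(⨍ y in ⇑A '' ball x R, b y) - ⨍ y in ball (A x) (K * R), b y| +
            |(⨍ y in ball (A x) (K * R), b y) - ⨍ y in ball (A x) R, b y| :=
            abs_sub_le _ _ _
        _ ≤ (K ^ N / d) * M + K ^ N * M := by
            refine add_le_add hb1 ?_
            rwa [abs_sub_comm]
        _ = (K ^ N / d + K ^ N) * M := by ring
    constructor
    · rintro ⟨C, hC⟩
      refine ⟨C + (K ^ N / d + K ^ N) * M, fun x R hR => ?_⟩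
      calc |(⨍ y in ball x R, b y) - ⨍ y in ball (A x) R, b y|
          ≤ |(⨍ y in ball x R, b y) - ⨍ y in ⇑A '' ball x R, b y| +
            |(⨍ y in ⇑A '' ball x R, b y) - ⨍ y in ball (A x) R, b y| := abs_sub_le _ _ _
        _ ≤ C + (K ^ N / d + K ^ N) * M := add_le_add (hC x R hR) (bridge x R hR)
    · rintro ⟨C, hC⟩
      refine ⟨C + (K ^ N / d + K ^ N) * M, fun x R hR => ?_⟩
      calc |(⨍ y in ball x R, b y) - ⨍ y in ⇑A '' ball x R, b y|
          ≤ |(⨍ y in ball x R, b y) - ⨍ y in ball (A x) R, b y| +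
            |(⨍ y in ball (A x) R, b y) - ⨍ y in ⇑A '' ball x R, b y| := abs_sub_le _ _ _
        _ ≤ C + (K ^ N / d + K ^ N) * M := by
            refine add_le_add (hC x R hR) ?_
            rw [abs_sub_comm]
            exact bridge x R hR
end

section
/- Let $A$ be an invertible matrix and suppose $b \in BMO^A(\mathbb{R}^n)$. If $z \in \mathbb{R}^n$ is a critical point of $b$, then $Az$ is also a critical point of $b$. (Consequently, either $b$ has no critical points, or $0$ is its only critical point, or together with any nonzero critical point $z$, all points $A^j z$, $j \geq 1$, are critical points.) -/
open MeasureTheory Metric Set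

lemma avg_diff_le {E : Type*} [NormedAddCommGroup E] [MeasurableSpace E]
    (μ : Measure E) (b : E → ℝ) {s t : Set E} (hst : s ⊆ t)
    (hs : μ s ≠ 0) (ht : μ t ≠ ⊤) (hint : IntegrableOn b t μ) :
    |(⨍ x in s, b x ∂μ) - ⨍ x in t, b x ∂μ| ≤
      (μ t / μ s).toReal * ⨍ x in t, |b x - ⨍ z in t, b z ∂μ| ∂μ := by
  set m := ⨍ x in t, b x ∂μ with hm
  have hsfin : μ s ≠ ⊤ := fun h => ht (top_le_iff.mp (h ▸ measure_mono hst))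
  have hspos : 0 < (μ s).toReal := ENNReal.toReal_pos hs hsfin
  have hints : IntegrableOn b s μ := hint.mono_set hst
  have habs : IntegrableOn (fun x => |b x - m|) t μ :=
    (hint.sub (integrableOn_const ht)).abs
  have key : (⨍ x in s, b x ∂μ) - m = ⨍ x in s, (b x - m) ∂μ := by
    rw [setAverage_eq, setAverage_eq, integral_sub hints (integrableOn_const hsfin),
      setIntegral_const, smul_sub, smul_eq_mul, smul_eq_mul, smul_eq_mul]
    congr 1
    have hsr : μ.real s ≠ 0 := hspos.ne'
    field_simp
  rw [key]
  have h1 : |⨍ x in s, (b x - m) ∂μ| ≤ ⨍ x in s, |b x - m| ∂μ := by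
    rw [setAverage_eq, setAverage_eq, smul_eq_mul, smul_eq_mul, abs_mul,
      abs_of_nonneg (by positivity)]
    gcongr
    simpa [Real.norm_eq_abs] using norm_integral_le_integral_norm (μ := μ.restrict s) (fun x => b x - m)
  refine h1.trans ?_
  rw [setAverage_eq, setAverage_eq, smul_eq_mul, smul_eq_mul, ENNReal.toReal_div]
  have h2 : ∫ x in s, |b x - m| ∂μ ≤ ∫ x in t, |b x - m| ∂μ :=
    setIntegral_mono_set habs (Filter.Eventually.of_forall fun x => abs_nonneg _)
      (HasSubset.Subset.eventuallyLE hst)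
  have htpos0 : 0 ≤ (μ t).toReal := ENNReal.toReal_nonneg
  calc (μ s).toReal⁻¹ * ∫ x in s, |b x - m| ∂μ
      ≤ (μ s).toReal⁻¹ * ∫ x in t, |b x - m| ∂μ := by gcongr
    _ = (μ t).toReal / (μ s).toReal * ((μ t).toReal⁻¹ * ∫ x in t, |b x - m| ∂μ) := by
        have htpos : (μ t).toReal ≠ 0 := by
          have : μ s ≤ μ t := measure_mono hst
          exact (ENNReal.toReal_pos (fun h => hs (le_antisymm (h ▸ this) zero_le)) ht).ne'
        field_simp

/-- If `b ∈ BMO^A(ℝⁿ)` and `z` is a critical point of `b`, then `A z` is also a critical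
point of `b`.  A point `z` is critical if every neighborhood of `z` contains a ball on which
the average of `b` is arbitrarily large. -/
theorem BMOA_critical_point_invariant {n : ℕ}
    (A : EuclideanSpace ℝ (Fin n) ≃L[ℝ] EuclideanSpace ℝ (Fin n))
    (b : EuclideanSpace ℝ (Fin n) → ℝ) (hb : LocallyIntegrable b volume)
    (M : ℝ) (hM : ∀ (x : EuclideanSpace ℝ (Fin n)) (R : ℝ), 0 < R →
      (⨍ y in ball x R, |b y - ⨍ z in ball x R, b z|) ≤ M)
    (C : ℝ) (hC : ∀ (x : EuclideanSpace ℝ (Fin n)) (R : ℝ), 0 < R →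
      |(⨍ y in ball x R, b y) - ⨍ y in (⇑A '' ball x R), b y| ≤ C)
    (z : EuclideanSpace ℝ (Fin n))
    (hz : ∀ ε > (0 : ℝ), ∀ N : ℝ, ∃ (y : EuclideanSpace ℝ (Fin n)) (r : ℝ),
      0 < r ∧ ball y r ⊆ ball z ε ∧ N < ⨍ w in ball y r, b w) :
    ∀ ε > (0 : ℝ), ∀ N : ℝ, ∃ (y : EuclideanSpace ℝ (Fin n)) (r : ℝ),
      0 < r ∧ ball y r ⊆ ball (A z) ε ∧ N < ⨍ w in ball y r, b w := by
  intro ε hε N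
  rcases subsingleton_or_nontrivial (EuclideanSpace ℝ (Fin n)) with hsub | hnt
  · have hAz : A z = z := Subsingleton.elim _ _
    rw [hAz]
    exact hz ε hε N
  set a : ℝ := ‖(A : EuclideanSpace ℝ (Fin n) →L[ℝ] EuclideanSpace ℝ (Fin n))‖ with ha_def
  set a' : ℝ := ‖(A.symm : EuclideanSpace ℝ (Fin n) →L[ℝ] EuclideanSpace ℝ (Fin n))‖ with ha'_def
  have haa' : 1 ≤ a' * a := by
    have h1 : ((A.symm : EuclideanSpace ℝ (Fin n) →L[ℝ] EuclideanSpace ℝ (Fin n)).comp (A : EuclideanSpace ℝ (Fin n) →L[ℝ] EuclideanSpace ℝ (Fin n))) = ContinuousLinearMap.id ℝ (EuclideanSpace ℝ (Fin n)) :=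
      A.coe_symm_comp_coe
    have h2 : ‖ContinuousLinearMap.id ℝ (EuclideanSpace ℝ (Fin n))‖ = 1 := ContinuousLinearMap.norm_id
    calc (1 : ℝ) = ‖((A.symm : EuclideanSpace ℝ (Fin n) →L[ℝ] EuclideanSpace ℝ (Fin n)).comp (A : EuclideanSpace ℝ (Fin n) →L[ℝ] EuclideanSpace ℝ (Fin n)))‖ := by rw [h1, h2]
      _ ≤ a' * a := ContinuousLinearMap.opNorm_comp_le _ _
  have ha : 0 < a := by nlinarith [norm_nonneg (A : EuclideanSpace ℝ (Fin n) →L[ℝ] EuclideanSpace ℝ (Fin n)), norm_nonneg (A.symm : EuclideanSpace ℝ (Fin n) →L[ℝ] EuclideanSpace ℝ (Fin n))]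
  have ha' : 0 < a' := by nlinarith [norm_nonneg (A : EuclideanSpace ℝ (Fin n) →L[ℝ] EuclideanSpace ℝ (Fin n)), norm_nonneg (A.symm : EuclideanSpace ℝ (Fin n) →L[ℝ] EuclideanSpace ℝ (Fin n))]
  set κ : ℝ := (a * a') ^ n with hκ_def
  have hκ : 0 ≤ κ := by positivity
  have avg_abs_nonneg : ∀ (c : EuclideanSpace ℝ (Fin n)) (R : ℝ),
      (0:ℝ) ≤ ⨍ y in ball c R, |b y - ⨍ w in ball c R, b w| := by
    intro c R
    rw [setAverage_eq]
    exact smul_nonneg (by positivity) (integral_nonneg fun x => abs_nonneg _)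
  have hM0 : 0 ≤ M := le_trans (avg_abs_nonneg z 1) (hM z 1 one_pos)
  -- image of a ball under A is in a ball
  have himg : ∀ (c : EuclideanSpace ℝ (Fin n)) (R : ℝ), 0 < R → ⇑A '' ball c R ⊆ ball (A c) (a * R) := by
    intro c R hR w hw
    obtain ⟨x, hx, rfl⟩ := hw
    rw [mem_ball, dist_eq_norm]
    have : A x - A c = A (x - c) := (map_sub A x c).symm
    rw [this]
    calc ‖A (x - c)‖ ≤ a * ‖x - c‖ := by
          simpa using (A : EuclideanSpace ℝ (Fin n) →L[ℝ] EuclideanSpace ℝ (Fin n)).le_opNorm (x - c)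
      _ < a * R := by
          have : ‖x - c‖ < R := by rwa [mem_ball, dist_eq_norm] at hx
          exact mul_lt_mul_of_pos_left this ha
  obtain ⟨y, r, hr, hball, havg⟩ := hz (ε / a) (div_pos hε ha) (N + C + 2 * (κ * M))
  refine ⟨A y, r / a', div_pos hr ha', ?_, ?_⟩
  -- notation
  · -- B₁ ⊆ ball (A z) ε
    have h1S : ball (A y) (r / a') ⊆ ⇑A '' ball y r := by
      intro w hw
      refine ⟨A.symm w, ?_, A.apply_symm_apply w⟩
      rw [mem_ball, dist_eq_norm]
      have : A.symm w - y = A.symm (w - A y) := by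
        rw [map_sub, A.symm_apply_apply]
      rw [this]
      calc ‖A.symm (w - A y)‖ ≤ a' * ‖w - A y‖ := by
            simpa using (A.symm : EuclideanSpace ℝ (Fin n) →L[ℝ] EuclideanSpace ℝ (Fin n)).le_opNorm (w - A y)
        _ < a' * (r / a') := by
            have : ‖w - A y‖ < r / a' := by rwa [mem_ball, dist_eq_norm] at hw
            exact mul_lt_mul_of_pos_left this ha'
        _ = r := by field_simp
    refine h1S.trans ((image_mono hball).trans ?_)
    have := himg z (ε / a) (div_pos hε ha)
    rwa [mul_div_cancel₀ _ ha.ne'] at this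
  · -- the average estimate
    set B₁ := ball (A y) (r / a') with hB₁
    set B₂ := ball (A y) (a * r) with hB₂
    set S := ⇑A '' ball y r with hS
    have h1S : B₁ ⊆ S := by
      intro w hw
      refine ⟨A.symm w, ?_, A.apply_symm_apply w⟩
      rw [mem_ball, dist_eq_norm]
      have : A.symm w - y = A.symm (w - A y) := by
        rw [map_sub, A.symm_apply_apply]
      rw [this]
      calc ‖A.symm (w - A y)‖ ≤ a' * ‖w - A y‖ := by
            simpa using (A.symm : EuclideanSpace ℝ (Fin n) →L[ℝ] EuclideanSpace ℝ (Fin n)).le_opNorm (w - A y)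
        _ < a' * (r / a') := by
            have : ‖w - A y‖ < r / a' := by rwa [mem_ball, dist_eq_norm] at hw
            exact mul_lt_mul_of_pos_left this ha'
        _ = r := by field_simp
    have hS2 : S ⊆ B₂ := himg y r hr
    have h12 : B₁ ⊆ B₂ := h1S.trans hS2
    have har : 0 < a * r := mul_pos ha hr
    have hra' : 0 < r / a' := div_pos hr ha'
    -- measures
    have hB₁meas : volume B₁ = ENNReal.ofReal ((r / a') ^ n) * volume (ball (0:EuclideanSpace ℝ (Fin n)) 1) := by
      rw [hB₁, Measure.addHaar_ball_of_pos volume (A y) hra', finrank_euclideanSpace_fin]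
    have hB₂meas : volume B₂ = ENNReal.ofReal ((a * r) ^ n) * volume (ball (0:EuclideanSpace ℝ (Fin n)) 1) := by
      rw [hB₂, Measure.addHaar_ball_of_pos volume (A y) har, finrank_euclideanSpace_fin]
    have hB₂eq : volume B₂ = ENNReal.ofReal κ * volume B₁ := by
      rw [hB₂meas, hB₁meas, ← mul_assoc, ← ENNReal.ofReal_mul hκ]
      congr 2
      rw [hκ_def, ← mul_pow]
      congr 1
      field_simp
    have hB₁0 : volume B₁ ≠ 0 := (measure_ball_pos volume (A y) hra').ne'
    have hS0 : volume S ≠ 0 := fun h =>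
      hB₁0 (le_antisymm (h ▸ measure_mono h1S) zero_le)
    have hB₂top : volume B₂ ≠ ⊤ := measure_ball_lt_top.ne
    have hint : IntegrableOn b B₂ volume :=
      (hb.integrableOn_isCompact (isCompact_closedBall (A y) (a * r))).mono_set
        ball_subset_closedBall
    -- ratio bounds
    have hratio : ∀ s : Set (EuclideanSpace ℝ (Fin n)), volume B₁ ≤ volume s →
        (volume B₂ / volume s).toReal ≤ κ := by
      intro s hle
      refine ENNReal.toReal_le_of_le_ofReal hκ (ENNReal.div_le_of_le_mul ?_)
      calc volume B₂ = ENNReal.ofReal κ * volume B₁ := hB₂eq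
        _ ≤ ENNReal.ofReal κ * volume s := by gcongr
    have hosc : (⨍ x in B₂, |b x - ⨍ w in B₂, b w|) ≤ M := hM (A y) (a * r) har
    have hoscnn : (0:ℝ) ≤ ⨍ x in B₂, |b x - ⨍ w in B₂, b w| := avg_abs_nonneg (A y) (a * r)
    have e1 : |(⨍ x in B₁, b x) - ⨍ x in B₂, b x| ≤ κ * M := by
      refine (avg_diff_le volume b h12 hB₁0 hB₂top hint).trans ?_
      exact mul_le_mul (hratio B₁ le_rfl) hosc hoscnn hκ
    have e2 : |(⨍ x in S, b x) - ⨍ x in B₂, b x| ≤ κ * M := by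
      refine (avg_diff_le volume b hS2 hS0 hB₂top hint).trans ?_
      exact mul_le_mul (hratio S (measure_mono h1S)) hosc hoscnn hκ
    have e3 : |(⨍ w in ball y r, b w) - ⨍ w in S, b w| ≤ C := hC y r hr
    have e1' := abs_sub_le_iff.mp e1
    have e2' := abs_sub_le_iff.mp e2
    have e3' := abs_sub_le_iff.mp e3
    have : N + C + 2 * (κ * M) < ⨍ w in ball y r, b w := havg
    linarith [e1'.1, e1'.2, e2'.1, e2'.2, e3'.1, e3'.2]
end

section
/- Let $\Phi \in \Delta_2 \cap \nabla_2$ be a Young function and $\phi \in \mathcal{G}^{dec}$. Then for any ball $B(x,R)$, $\|\chi_{B(x,R)}\|_{L(\Phi,\phi)} \sim \frac{1}{\Phi^{-1}(\phi(R))}$, with implicit constants independent of $x$ and $R$. -/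
set_option maxHeartbeats 1000000


open MeasureTheory Metric Set Filter

/-- Generalized inverse of a Young function. -/
noncomputable def phiInv (Φ : ℝ → ℝ) (v : ℝ) : ℝ :=
  sSup {u : ℝ | 0 ≤ u ∧ Φ u ≤ v}

/-- The local Orlicz–Morrey (Luxemburg-type) norm `‖f‖_{Φ,φ,B(x,R)}`. -/
noncomputable def ballOrliczNorm {n : ℕ} (Φ φ : ℝ → ℝ)
    (f : EuclideanSpace ℝ (Fin n) → ℝ) (x : EuclideanSpace ℝ (Fin n)) (R : ℝ) : ℝ :=
  sInf {lam : ℝ | 0 < lam ∧ (1 / φ R) * ⨍ y in ball x R, Φ (|f y| / lam) ≤ 1}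

/-- The Orlicz–Morrey norm `‖f‖_{L(Φ,φ)} = sup_B ‖f‖_{Φ,φ,B}`. -/
noncomputable def orliczMorreyNorm {n : ℕ} (Φ φ : ℝ → ℝ)
    (f : EuclideanSpace ℝ (Fin n) → ℝ) : ℝ :=
  sSup {c : ℝ | ∃ (x : EuclideanSpace ℝ (Fin n)) (R : ℝ), 0 < R ∧
    c = ballOrliczNorm Φ φ f x R}

/-- For `Φ ∈ Δ₂ ∩ ∇₂` and `φ ∈ 𝒢^dec`,
`‖χ_{B(x,R)}‖_{L(Φ,φ)} ∼ 1 / Φ⁻¹(φ(R))`. -/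
theorem indicator_orliczMorrey_norm {n : ℕ} (hn : 1 ≤ n) (Φ φ : ℝ → ℝ)
    (hconv : ConvexOn ℝ (Ici 0) Φ) (hmono : MonotoneOn Φ (Ici 0))
    (h0 : Φ 0 = 0) (htop : Tendsto Φ atTop atTop)
    (hdelta : ∃ C > (0 : ℝ), ∀ t > (0 : ℝ), Φ (2 * t) ≤ C * Φ t)
    (hnabla : ∃ K > (1 : ℝ), ∀ t > (0 : ℝ), Φ t ≤ Φ (K * t) / (2 * K))
    (hφpos : ∀ t > (0 : ℝ), 0 < φ t)
    (hφdec : ∃ C > (0 : ℝ), ∀ t₁ t₂ : ℝ, 0 < t₁ → t₁ < t₂ →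
      φ t₂ ≤ C * φ t₁ ∧ φ t₁ * t₁ ^ n ≤ C * (φ t₂ * t₂ ^ n)) :
    ∃ c₁ > (0 : ℝ), ∃ c₂ > (0 : ℝ), ∀ (x : EuclideanSpace ℝ (Fin n)) (R : ℝ), 0 < R →
      c₁ * (phiInv Φ (φ R))⁻¹ ≤
        orliczMorreyNorm Φ φ ((ball x R).indicator fun _ => (1 : ℝ)) ∧
      orliczMorreyNorm Φ φ ((ball x R).indicator fun _ => (1 : ℝ)) ≤
        c₂ * (phiInv Φ (φ R))⁻¹ := by
  classical
  obtain ⟨C, hCpos, hG⟩ := hφdec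
  set C' : ℝ := max C 1 with hC'def
  have hC'1 : (1:ℝ) ≤ C' := le_max_right _ _
  have hC'C : C ≤ C' := le_max_left _ _
  have hC'pos : (0:ℝ) < C' := lt_of_lt_of_le one_pos hC'1
  -- convexity scaling: Φ (a * t) ≤ a * Φ t for 0 ≤ a ≤ 1, 0 ≤ t
  have hscale : ∀ a t : ℝ, 0 ≤ a → a ≤ 1 → 0 ≤ t → Φ (a * t) ≤ a * Φ t := by
    intro a t ha ha1 ht
    have := hconv.2 (mem_Ici.2 ht) (mem_Ici.2 (le_refl (0:ℝ))) ha
      (by linarith : (0:ℝ) ≤ 1 - a) (by ring)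
    simpa [h0, smul_eq_mul] using this
  have hΦnonneg : ∀ t : ℝ, 0 ≤ t → 0 ≤ Φ t := by
    intro t ht
    have := hmono (mem_Ici.2 le_rfl) (mem_Ici.2 ht) ht
    simpa [h0] using this
  -- Nontriviality of the Euclidean space
  haveI : Nontrivial (EuclideanSpace ℝ (Fin n)) := by
    apply Module.nontrivial_of_finrank_pos (R := ℝ)
    rw [finrank_euclideanSpace_fin]
    omega
  -- volume of balls
  set c : ℝ := (volume (ball (0 : EuclideanSpace ℝ (Fin n)) 1)).toReal with hcdef
  have hcpos : 0 < c := by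
    rw [hcdef]
    exact ENNReal.toReal_pos (measure_ball_pos volume _ one_pos).ne' measure_ball_lt_top.ne
  have hvol : ∀ (z : EuclideanSpace ℝ (Fin n)) (r : ℝ), 0 ≤ r →
      (volume (ball z r)).toReal = r ^ n * c := by
    intro z r hr
    rw [Measure.addHaar_ball volume z hr, finrank_euclideanSpace_fin, ENNReal.toReal_mul,
      ENNReal.toReal_ofReal (pow_nonneg hr n)]
  refine ⟨1, one_pos, 2 * C', by positivity, ?_⟩
  intro x R hR
  set v : ℝ := φ R with hvdef
  have hv : 0 < v := hφpos R hR
  set f : EuclideanSpace ℝ (Fin n) → ℝ := (ball x R).indicator fun _ => (1 : ℝ) with hfdef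
  set S : Set ℝ := {u : ℝ | 0 ≤ u ∧ Φ u ≤ v} with hSdef
  have hS0 : (0:ℝ) ∈ S := ⟨le_rfl, by rw [h0]; exact hv.le⟩
  have hSbdd : BddAbove S := by
    obtain ⟨M, hM⟩ := (htop.eventually_ge_atTop (v + 1)).exists_forall_of_atTop
    refine ⟨M, fun u hu => ?_⟩
    by_contra h
    push_neg at h
    have := hM u h.le
    linarith [hu.2]
  set u₀ : ℝ := phiInv Φ v with hu₀def
  have hu₀eq : u₀ = sSup S := rfl
  have hu₀pos : 0 < u₀ := by
    have hΦ1 : 0 ≤ Φ 1 := hΦnonneg 1 zero_le_one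
    rcases le_or_gt (Φ 1) v with h | h
    · have h1S : (1:ℝ) ∈ S := ⟨zero_le_one, h⟩
      calc (0:ℝ) < 1 := one_pos
        _ ≤ u₀ := le_csSup hSbdd h1S
    · have hΦ1pos : 0 < Φ 1 := hv.trans h
      have hupos : 0 < v / Φ 1 := div_pos hv hΦ1pos
      have hu1 : v / Φ 1 ≤ 1 := by
        rw [div_le_one hΦ1pos]; exact h.le
      have huS : v / Φ 1 ∈ S := by
        refine ⟨hupos.le, ?_⟩
        have hthis := hscale (v / Φ 1) 1 hupos.le hu1 zero_le_one
        calc Φ (v / Φ 1) = Φ (v / Φ 1 * 1) := by rw [mul_one]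
          _ ≤ v / Φ 1 * Φ 1 := hthis
          _ = v := by field_simp
      exact lt_of_lt_of_le hupos (le_csSup hSbdd huS)
  -- key estimate: C' * Φ (u₀ / (2 * C')) ≤ v
  have hkey : C' * Φ (u₀ / (2 * C')) ≤ v := by
    obtain ⟨u, huS, hu⟩ := exists_lt_of_lt_csSup ⟨0, hS0⟩
      (show u₀ / 2 < sSup S from by rw [← hu₀eq]; exact half_lt_self hu₀pos)
    have hupos : 0 < u := lt_of_le_of_lt (by positivity) hu
    have h1 : u₀ / (2 * C') ≤ u / C' := by
      rw [div_le_div_iff₀ (by positivity) hC'pos]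
      nlinarith
    have h2 : Φ (u₀ / (2 * C')) ≤ Φ (u / C') :=
      hmono (mem_Ici.2 (by positivity)) (mem_Ici.2 (by positivity)) h1
    have h3 : Φ (u / C') ≤ (1 / C') * Φ u := by
      have := hscale (1 / C') u (by positivity) (by rw [div_le_one hC'pos]; exact hC'1)
        hupos.le
      calc Φ (u / C') = Φ ((1 / C') * u) := by ring_nf
        _ ≤ (1 / C') * Φ u := this
    have h4 : C' * Φ (u / C') ≤ Φ u := by
      have := mul_le_mul_of_nonneg_left h3 hC'pos.le
      calc C' * Φ (u / C') ≤ C' * ((1 / C') * Φ u) := this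
        _ = Φ u := by field_simp
    have h5 : C' * Φ (u₀ / (2 * C')) ≤ C' * Φ (u / C') :=
      mul_le_mul_of_nonneg_left h2 hC'pos.le
    calc C' * Φ (u₀ / (2 * C')) ≤ C' * Φ (u / C') := h5
      _ ≤ Φ u := h4
      _ ≤ v := huS.2
  have hΦknn : 0 ≤ Φ (u₀ / (2 * C')) := hΦnonneg _ (by positivity)
  -- the average over a ball
  have havg : ∀ (z : EuclideanSpace ℝ (Fin n)) (r lam : ℝ), 0 < lam →
      (⨍ y in ball z r, Φ (|f y| / lam)) =
      (volume (ball z r)).toReal⁻¹ *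
        ((volume (ball z r ∩ ball x R)).toReal * Φ (1 / lam)) := by
    intro z r lam hlam
    have hfun : (fun y => Φ (|f y| / lam)) =
        (ball x R).indicator (fun _ => Φ (1 / lam)) := by
      funext y
      by_cases hy : y ∈ ball x R
      · simp [hfdef, indicator_of_mem hy]
      · simp [hfdef, indicator_of_notMem hy, h0]
    rw [show (⨍ y in ball z r, Φ (|f y| / lam)) =
        ⨍ y in ball z r, (ball x R).indicator (fun _ => Φ (1 / lam)) y from by rw [hfun],
      setAverage_eq, setIntegral_indicator measurableSet_ball, setIntegral_const,
      smul_eq_mul, smul_eq_mul]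
    rfl
  -- the candidate lam₀
  set lam₀ : ℝ := 2 * C' / u₀ with hlamdef
  have hlam₀pos : 0 < lam₀ := by positivity
  have hinvlam : 1 / lam₀ = u₀ / (2 * C') := by
    rw [hlamdef, one_div_div]
  -- lam₀ belongs to every ball's admissible set
  have hmem : ∀ (z : EuclideanSpace ℝ (Fin n)) (r : ℝ), 0 < r →
      lam₀ ∈ {lam : ℝ | 0 < lam ∧ (1 / φ r) * ⨍ y in ball z r, Φ (|f y| / lam) ≤ 1} := by
    intro z r hr
    refine ⟨hlam₀pos, ?_⟩
    have hφr : 0 < φ r := hφpos r hr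
    rw [havg z r lam₀ hlam₀pos, hinvlam]
    set Vr : ℝ := (volume (ball z r)).toReal with hVr
    set I : ℝ := (volume (ball z r ∩ ball x R)).toReal with hI
    have hVreq : Vr = r ^ n * c := hvol z r hr.le
    have hVrpos : 0 < Vr := by rw [hVreq]; positivity
    have hInn : 0 ≤ I := ENNReal.toReal_nonneg
    have hI1 : I ≤ Vr := by
      apply ENNReal.toReal_mono measure_ball_lt_top.ne
      exact measure_mono inter_subset_left
    have hI2 : I ≤ R ^ n * c := by
      rw [← hvol x R hR.le]
      apply ENNReal.toReal_mono measure_ball_lt_top.ne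
      exact measure_mono inter_subset_right
    set Φk : ℝ := Φ (u₀ / (2 * C')) with hΦk
    -- suffices to show the main bound
    have hmain : Vr⁻¹ * (I * Φk) ≤ φ r := by
      rcases le_or_gt r R with hrR | hRr
      · -- small balls: I ≤ Vr and Φk ≤ φ r
        have hvr : v ≤ C' * φ r := by
          rcases eq_or_lt_of_le hrR with heq | hlt
          · rw [hvdef, ← heq]
            nlinarith [hφpos r hr]
          · have := (hG r R hr hlt).1
            calc v ≤ C * φ r := this
              _ ≤ C' * φ r := by nlinarith
        have hΦkr : Φk ≤ φ r := by nlinarith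
        calc Vr⁻¹ * (I * Φk) ≤ Vr⁻¹ * (Vr * Φk) := by
              apply mul_le_mul_of_nonneg_left _ (by positivity)
              exact mul_le_mul_of_nonneg_right hI1 hΦknn
          _ = Φk := by field_simp
          _ ≤ φ r := hΦkr
      · -- large balls: I ≤ R^n c and use the growth condition
        have hB : v * R ^ n ≤ C' * (φ r * r ^ n) := by
          have := (hG R r hR hRr).2
          have hφrn : 0 ≤ φ r * r ^ n := by positivity
          nlinarith
        have h6 : I * Φk ≤ (R ^ n * c) * Φk :=
          mul_le_mul_of_nonneg_right hI2 hΦknn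
        have h7 : C' * ((R ^ n * c) * Φk) ≤ v * R ^ n * c := by nlinarith
        rw [inv_mul_le_iff₀ hVrpos, hVreq]
        have hRn : (0:ℝ) ≤ R ^ n := by positivity
        nlinarith
    calc (1 / φ r) * (Vr⁻¹ * (I * Φk)) ≤ (1 / φ r) * φ r := by
          apply mul_le_mul_of_nonneg_left hmain (by positivity)
      _ = 1 := by field_simp
  -- lower bound for the ball B(x,R) itself
  have hlow : ∀ lam ∈ {lam : ℝ | 0 < lam ∧
      (1 / φ R) * ⨍ y in ball x R, Φ (|f y| / lam) ≤ 1}, u₀⁻¹ ≤ lam := by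
    rintro lam ⟨hlam, hcond⟩
    rw [havg x R lam hlam, inter_self] at hcond
    have hVRpos : 0 < (volume (ball x R)).toReal := by rw [hvol x R hR.le]; positivity
    have hcond' : Φ (1 / lam) ≤ v := by
      have h8 : (volume (ball x R)).toReal⁻¹ *
          ((volume (ball x R)).toReal * Φ (1 / lam)) = Φ (1 / lam) := by
        field_simp
      rw [h8] at hcond
      rw [one_div, inv_mul_le_iff₀ (hφpos R hR), mul_one] at hcond
      exact hcond
    have hmemS : 1 / lam ∈ S := ⟨by positivity, hcond'⟩
    have h9 : 1 / lam ≤ u₀ := by rw [hu₀eq]; exact le_csSup hSbdd hmemS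
    have h10 : 0 < 1 / lam := by positivity
    calc u₀⁻¹ ≤ (1 / lam)⁻¹ := by
          apply inv_anti₀ h10 h9
      _ = lam := by field_simp
  -- assemble
  have hbln_lb : u₀⁻¹ ≤ ballOrliczNorm Φ φ f x R := by
    unfold ballOrliczNorm
    exact le_csInf ⟨lam₀, hmem x R hR⟩ hlow
  have hbln_ub : ∀ (z : EuclideanSpace ℝ (Fin n)) (r : ℝ), 0 < r →
      ballOrliczNorm Φ φ f z r ≤ lam₀ := by
    intro z r hr
    unfold ballOrliczNorm
    exact csInf_le ⟨0, fun a ha => ha.1.le⟩ (hmem z r hr)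
  have hTbdd : BddAbove {c : ℝ | ∃ (z : EuclideanSpace ℝ (Fin n)) (r : ℝ), 0 < r ∧
      c = ballOrliczNorm Φ φ f z r} := by
    refine ⟨lam₀, ?_⟩
    rintro t ⟨z, r, hr, rfl⟩
    exact hbln_ub z r hr
  have hTmem : ballOrliczNorm Φ φ f x R ∈
      {c : ℝ | ∃ (z : EuclideanSpace ℝ (Fin n)) (r : ℝ), 0 < r ∧
      c = ballOrliczNorm Φ φ f z r} := ⟨x, R, hR, rfl⟩
  constructor
  · calc 1 * (phiInv Φ (φ R))⁻¹ = u₀⁻¹ := by rw [one_mul]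
      _ ≤ ballOrliczNorm Φ φ f x R := hbln_lb
      _ ≤ orliczMorreyNorm Φ φ f := by
          unfold orliczMorreyNorm
          exact le_csSup hTbdd hTmem
  · have : orliczMorreyNorm Φ φ f ≤ lam₀ := by
      unfold orliczMorreyNorm
      apply csSup_le ⟨_, hTmem⟩
      rintro t ⟨z, r, hr, rfl⟩
      exact hbln_ub z r hr
    calc orliczMorreyNorm Φ φ f ≤ lam₀ := this
      _ = 2 * C' * (phiInv Φ (φ R))⁻¹ := by
          rw [hlamdef, div_eq_mul_inv]
end
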